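/- Let ψ₁,…,ψ_m be bounded measurable functions on [0,1] that are orthonormal in L²([0,1]), and let A < ∞ be a constant such that ‖v‖_∞ ≤ A‖v‖_{L²} for every v in the linear span of ψ₁,…,ψ_m. Let f be a measurable function on [0,1] with M₁⁻¹ ≤ f ≤ M₁ for a constant M₁ > 0, set g = log f, let g_V = Σᵢ₌₁^m ⟨g,ψ_i⟩ ψ_i be the L²-orthogonal projection of g onto the span (assumed essentially bounded away from g: set γ = ‖g − g_V‖_∞ and D = ‖g − g_V‖_{L²}). If ε := 2M₁² e^{2γ+1} D A ≤ 1, then there exists θ* ∈ ℝ^m such that ∫₀¹ f_{θ*} ψ_i dμ = ∫₀¹ f ψ_i dμ for all i = 1,…,m, and moreover Δ(f; f_{θ*}) ≤ (M₁/2) e^{γ} D². -/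

import Mathlib

open MeasureTheory

/-- The generalized Kullback–Leibler divergence
`Δ(f;g) = ∫₀¹ (f log(f/g) − f + g) dμ`, `μ` the Lebesgue measure on `[0,1]`. -/
noncomputable def KLdiv (f g : ℝ → ℝ) : ℝ :=
  ∫ x in Set.Icc (0:ℝ) 1, (f x * Real.log (f x / g x) - f x + g x)

/-- The exponential family member `f_θ = exp(Σ_{i} θ_i ψ_i)`. -/
noncomputable def expFam {m : ℕ} (ψ : Fin m → ℝ → ℝ) (θ : Fin m → ℝ) : ℝ → ℝ :=
  fun x => Real.exp (∑ i, θ i * ψ i x)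

/-- Supremum norm of a function over `[0,1]`. -/
noncomputable def supIcc (h : ℝ → ℝ) : ℝ := ⨆ x : Set.Icc (0:ℝ) 1, |h x|

/-- The residual `g − g_V` of the `L²`-orthogonal projection of `g = log f` onto
the span of the orthonormal family `ψ`, i.e. `g − Σᵢ ⟨g,ψᵢ⟩ ψᵢ`. -/
noncomputable def projResidual {m : ℕ} (ψ : Fin m → ℝ → ℝ) (f : ℝ → ℝ) : ℝ → ℝ :=
  fun x => Real.log (f x)
    - ∑ i, (∫ t in Set.Icc (0:ℝ) 1, Real.log (f t) * ψ i t) * ψ i x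

/- ============ auxiliary lemmas ============ -/

lemma ibdd {h : ℝ → ℝ} (hm : Measurable h) {C : ℝ} (hb : ∀ x ∈ Set.Icc (0:ℝ) 1, |h x| ≤ C) :
    IntegrableOn h (Set.Icc (0:ℝ) 1) := by
  refine ⟨hm.aestronglyMeasurable, ?_⟩
  apply MeasureTheory.HasFiniteIntegral.of_bounded (C := C)
  filter_upwards [ae_restrict_mem measurableSet_Icc] with x hx
  simpa using hb x hx

lemma hd_rho (t : ℝ) : HasDerivAt (fun t : ℝ => 1 + t + t^2/2 - Real.exp t)
    (1 + t - Real.exp t) t := by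
  have h1 : HasDerivAt (fun t : ℝ => 1 + t + t^2/2 - Real.exp t)
      (0 + 1 + (↑2 * t^(2-1))/2 - Real.exp t) t := by
    exact (((hasDerivAt_const t (1:ℝ)).add (hasDerivAt_id t)).add
      ((hasDerivAt_pow 2 t).div_const 2)).sub (Real.hasDerivAt_exp t)
  convert h1 using 1; push_cast; ring

lemma exp_quad_neg {s : ℝ} (hs : s ≤ 0) : Real.exp s ≤ 1 + s + s^2/2 := by
  have hanti : Antitone (fun t : ℝ => 1 + t + t^2/2 - Real.exp t) := by
    apply antitone_of_deriv_nonpos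
    · intro t; exact (hd_rho t).differentiableAt
    · intro t; rw [(hd_rho t).deriv]; have := Real.add_one_le_exp t; linarith
  have := hanti hs
  simp only [Real.exp_zero] at this
  nlinarith [this]

lemma hd_phi (t : ℝ) : HasDerivAt (fun t : ℝ => t^2/2 * Real.exp t - Real.exp t + 1 + t)
    (t * Real.exp t + t^2/2 * Real.exp t - Real.exp t + 1) t := by
  have h1 : HasDerivAt (fun t : ℝ => t^2/2 * Real.exp t - Real.exp t + 1 + t)
      (((↑2 * t^(2-1))/2 * Real.exp t + t^2/2 * Real.exp t) - Real.exp t + 0 + 1) t := by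
    exact (((((hasDerivAt_pow 2 t).div_const 2).mul (Real.hasDerivAt_exp t)).sub
      (Real.hasDerivAt_exp t)).add (hasDerivAt_const t (1:ℝ))).add (hasDerivAt_id t)
  convert h1 using 1; push_cast; ring

lemma exp_quad_pos {s : ℝ} (hs : 0 ≤ s) : Real.exp s - 1 - s ≤ s^2/2 * Real.exp s := by
  have hmono : Monotone (fun t : ℝ => t^2/2 * Real.exp t - Real.exp t + 1 + t) := by
    apply monotone_of_deriv_nonneg
    · intro t; exact (hd_phi t).differentiableAt
    · intro t; rw [(hd_phi t).deriv]
      have hE : 0 < Real.exp t := Real.exp_pos t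
      have h2 : 1 + (-t) ≤ Real.exp (-t) := by linarith [Real.add_one_le_exp (-t)]
      have h3 : Real.exp t * Real.exp (-t) = 1 := by
        rw [← Real.exp_add]; simp
      nlinarith [mul_le_mul_of_nonneg_left h2 hE.le, sq_nonneg t]
  have := hmono hs
  simp only [Real.exp_zero] at this
  nlinarith [this]

lemma exp_taylor_two {s g : ℝ} (h : |s| ≤ g) : Real.exp s - 1 - s ≤ s^2/2 * Real.exp g := by
  have hg : 0 ≤ g := le_trans (abs_nonneg s) h
  rcases le_or_gt s 0 with hs | hs
  · have h1 := exp_quad_neg hs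
    have h2 : (1:ℝ) ≤ Real.exp g := by
      rw [← Real.exp_zero]; exact Real.exp_le_exp.2 hg
    nlinarith [sq_nonneg s]
  · have h1 := exp_quad_pos hs.le
    have h2 : Real.exp s ≤ Real.exp g := by
      apply Real.exp_le_exp.2; rw [abs_of_pos hs] at h; exact h
    nlinarith [sq_nonneg s]

lemma abs3 {x y z : ℝ} : |x - y + z| ≤ |x| + |y| + |z| := by
  calc |x - y + z| ≤ |x - y| + |z| := abs_add_le _ _
    _ ≤ |x| + |y| + |z| := by linarith [abs_sub x y]

lemma sum_bd {m : ℕ} (ψ : Fin m → ℝ → ℝ) (Cb : Fin m → ℝ) (hCb : ∀ i x, |ψ i x| ≤ Cb i)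
    (θ : Fin m → ℝ) (x : ℝ) : |∑ i, θ i * ψ i x| ≤ ‖θ‖ * ∑ i, Cb i := by
  calc |∑ i, θ i * ψ i x| ≤ ∑ i, |θ i * ψ i x| := Finset.abs_sum_le_sum_abs _ _
    _ ≤ ∑ i, ‖θ‖ * Cb i := by
        apply Finset.sum_le_sum; intro i _
        rw [abs_mul]
        refine mul_le_mul ?_ (hCb i x) (abs_nonneg _) (norm_nonneg _)
        rw [← Real.norm_eq_abs]; exact norm_le_pi_norm θ i
    _ = ‖θ‖ * ∑ i, Cb i := by rw [← Finset.mul_sum]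

/-- orthonormal expansion of the integral of a squared combination -/
lemma integral_sum_sq {m : ℕ} (ψ : Fin m → ℝ → ℝ) (hψmeas : ∀ i, Measurable (ψ i))
    (Cb : Fin m → ℝ) (hCb : ∀ i x, |ψ i x| ≤ Cb i)
    (horth : ∀ i j, (∫ x in Set.Icc (0:ℝ) 1, ψ i x * ψ j x) = if i = j then 1 else 0)
    (c : Fin m → ℝ) :
    (∫ x in Set.Icc (0:ℝ) 1, (∑ i, c i * ψ i x)^2) = ∑ i, (c i)^2 := by
  have hint : ∀ i j : Fin m, IntegrableOn (fun x => (c i * c j) * (ψ i x * ψ j x))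
      (Set.Icc (0:ℝ) 1) := by
    intro i j
    apply ibdd (((hψmeas i).mul (hψmeas j)).const_mul _) (C := |c i * c j| * (Cb i * Cb j))
    intro x _
    rw [abs_mul, abs_mul, Pi.mul_apply, abs_mul]
    gcongr
    · exact (abs_nonneg _).trans (hCb i x)
    · exact hCb i x
    · exact hCb j x
  have h1 : ∀ x, (∑ i, c i * ψ i x)^2 = ∑ i, ∑ j, (c i * c j) * (ψ i x * ψ j x) := by
    intro x; rw [sq, Finset.sum_mul_sum]
    exact Finset.sum_congr rfl fun i _ => Finset.sum_congr rfl fun j _ => by ring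
  simp only [h1]
  rw [integral_finset_sum _ (fun i _ => integrable_finset_sum _ (fun j _ => hint i j))]
  have h2 : ∀ i : Fin m, (∫ x in Set.Icc (0:ℝ) 1, ∑ j, (c i * c j) * (ψ i x * ψ j x))
      = ∑ j, (c i * c j) * ∫ x in Set.Icc (0:ℝ) 1, ψ i x * ψ j x := by
    intro i
    rw [integral_finset_sum _ (fun j _ => hint i j)]
    exact Finset.sum_congr rfl fun j _ => MeasureTheory.integral_const_mul _ _
  simp only [h2, horth, mul_ite, mul_one, mul_zero, Finset.sum_ite_eq, Finset.mem_univ,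
    if_true, sq]

/-- linearity: integral of h times a combination -/
lemma integral_mul_lsum {m : ℕ} (ψ : Fin m → ℝ → ℝ) (hψmeas : ∀ i, Measurable (ψ i))
    (Cb : Fin m → ℝ) (hCb : ∀ i x, |ψ i x| ≤ Cb i)
    {h : ℝ → ℝ} (hm : Measurable h) {Ch : ℝ} (hb : ∀ x ∈ Set.Icc (0:ℝ) 1, |h x| ≤ Ch)
    (c : Fin m → ℝ) :
    (∫ x in Set.Icc (0:ℝ) 1, h x * (∑ i, c i * ψ i x))
      = ∑ i, c i * ∫ x in Set.Icc (0:ℝ) 1, h x * ψ i x := by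
  have hint : ∀ i : Fin m, IntegrableOn (fun x => c i * (h x * ψ i x)) (Set.Icc (0:ℝ) 1) := by
    intro i
    apply ibdd ((hm.mul (hψmeas i)).const_mul _) (C := |c i| * (Ch * Cb i))
    intro x hx
    rw [abs_mul, Pi.mul_apply, abs_mul]
    gcongr
    · exact (abs_nonneg _).trans (hb x hx)
    · exact hb x hx
    · exact hCb i x
  have h1 : ∀ x, h x * (∑ i, c i * ψ i x) = ∑ i, c i * (h x * ψ i x) := by
    intro x; rw [Finset.mul_sum]
    exact Finset.sum_congr rfl fun i _ => by ring
  simp only [h1]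
  rw [integral_finset_sum _ (fun i _ => hint i)]
  exact Finset.sum_congr rfl fun i _ => MeasureTheory.integral_const_mul _ _

lemma le_supIcc {h : ℝ → ℝ} {C : ℝ} (hb : ∀ x, |h x| ≤ C) {x : ℝ}
    (hx : x ∈ Set.Icc (0:ℝ) 1) : |h x| ≤ supIcc h := by
  exact le_ciSup (f := fun y : Set.Icc (0:ℝ) 1 => |h y.1|)
    ⟨C, by rintro _ ⟨y, rfl⟩; exact hb y⟩ ⟨x, hx⟩

lemma A_pos {m : ℕ} (hm0 : 0 < m) (ψ : Fin m → ℝ → ℝ)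
    (Cb : Fin m → ℝ) (hCb : ∀ i x, |ψ i x| ≤ Cb i)
    (horth : ∀ i j, (∫ x in Set.Icc (0:ℝ) 1, ψ i x * ψ j x) = if i = j then 1 else 0)
    (A : ℝ)
    (hA : ∀ c : Fin m → ℝ, supIcc (fun x => ∑ i, c i * ψ i x)
      ≤ A * Real.sqrt (∫ x in Set.Icc (0:ℝ) 1, (∑ i, c i * ψ i x)^2)) : 0 < A := by
  by_contra hcon
  push_neg at hcon
  set i0 : Fin m := ⟨0, hm0⟩
  set c : Fin m → ℝ := fun j => if j = i0 then 1 else 0 with hc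
  have hsum : ∀ x, (∑ i, c i * ψ i x) = ψ i0 x := by
    intro x
    simp [hc, ite_mul, one_mul, zero_mul, Finset.sum_ite_eq', Finset.mem_univ]
  have hint : (∫ x in Set.Icc (0:ℝ) 1, (∑ i, c i * ψ i x)^2) = 1 := by
    have h1 : ∀ x, (∑ i, c i * ψ i x)^2 = ψ i0 x * ψ i0 x := by
      intro x; rw [hsum]; ring
    simp only [h1]; rw [horth i0 i0]; simp
  have h2 := hA c
  rw [hint, Real.sqrt_one, mul_one] at h2
  have hzero : ∀ x ∈ Set.Icc (0:ℝ) 1, ψ i0 x = 0 := by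
    intro x hx
    have hb : ∀ y, |∑ i, c i * ψ i y| ≤ Cb i0 := by
      intro y; rw [hsum]; exact hCb i0 y
    have h3 := le_supIcc hb hx
    rw [hsum] at h3
    have : |ψ i0 x| ≤ 0 := h3.trans (h2.trans hcon)
    exact abs_eq_zero.mp (le_antisymm this (abs_nonneg _))
  have h4 : (∫ x in Set.Icc (0:ℝ) 1, ψ i0 x * ψ i0 x) = 0 := by
    rw [setIntegral_congr_fun measurableSet_Icc
      (g := fun _ => (0:ℝ)) (fun x hx => by rw [hzero x hx]; ring)]
    simp
  rw [horth i0 i0] at h4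
  simp at h4

lemma coercive_pointwise {M₁ : ℝ} (hM₁ : 0 < M₁) {t v : ℝ} (htl : M₁⁻¹ ≤ t) (htu : t ≤ M₁) :
    M₁⁻¹ * |v| - (M₁ + M₁⁻¹) * |1 - Real.log (M₁ + M₁⁻¹)| ≤ Real.exp v - t * v := by
  have hc : 0 < M₁ + M₁⁻¹ := by positivity
  have hK0 : 0 ≤ (M₁ + M₁⁻¹) * |1 - Real.log (M₁ + M₁⁻¹)| := by positivity
  rcases le_or_gt v 0 with hv | hv
  · have h1 : 0 < Real.exp v := Real.exp_pos v
    have h2 : M₁⁻¹ * (-v) ≤ t * (-v) := mul_le_mul_of_nonneg_right htl (by linarith)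
    rw [abs_of_nonpos hv]
    nlinarith
  · have h3 := Real.add_one_le_exp (v - Real.log (M₁ + M₁⁻¹))
    rw [Real.exp_sub, Real.exp_log hc] at h3
    have h4 : (M₁ + M₁⁻¹) * (v - Real.log (M₁ + M₁⁻¹) + 1) ≤ Real.exp v := by
      have := (le_div_iff₀ hc).mp h3
      nlinarith
    have h5 : t * v ≤ M₁ * v := mul_le_mul_of_nonneg_right htu hv.le
    have h6 : -((M₁ + M₁⁻¹) * |1 - Real.log (M₁ + M₁⁻¹)|)
        ≤ (M₁ + M₁⁻¹) * (1 - Real.log (M₁ + M₁⁻¹)) := by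
      rw [← mul_neg]
      exact mul_le_mul_of_nonneg_left (neg_abs_le _) hc.le
    have h7 : M₁⁻¹ * M₁ = 1 := inv_mul_cancel₀ hM₁.ne'
    rw [abs_of_pos hv]
    nlinarith

lemma L_lower_bound {m : ℕ} (ψ : Fin m → ℝ → ℝ) (hψmeas : ∀ i, Measurable (ψ i))
    (Cb : Fin m → ℝ) (hCb : ∀ i x, |ψ i x| ≤ Cb i)
    (horth : ∀ i j, (∫ x in Set.Icc (0:ℝ) 1, ψ i x * ψ j x) = if i = j then 1 else 0)
    (A : ℝ) (hA0 : 0 < A)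
    (hA : ∀ c : Fin m → ℝ, supIcc (fun x => ∑ i, c i * ψ i x)
      ≤ A * Real.sqrt (∫ x in Set.Icc (0:ℝ) 1, (∑ i, c i * ψ i x)^2))
    (f : ℝ → ℝ) (hf : Measurable f) (M₁ : ℝ) (hM₁ : 0 < M₁)
    (hfbd : ∀ x ∈ Set.Icc (0:ℝ) 1, M₁⁻¹ ≤ f x ∧ f x ≤ M₁) (θ : Fin m → ℝ) :
    M₁⁻¹ * (‖θ‖ / A) - (M₁ + M₁⁻¹) * |1 - Real.log (M₁ + M₁⁻¹)| ≤
      (∫ x in Set.Icc (0:ℝ) 1, Real.exp (∑ i, θ i * ψ i x))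
        - ∑ i, θ i * (∫ x in Set.Icc (0:ℝ) 1, f x * ψ i x) := by
  have hfabs : ∀ x ∈ Set.Icc (0:ℝ) 1, |f x| ≤ M₁ := by
    intro x hx
    obtain ⟨h1, h2⟩ := hfbd x hx
    have : 0 < f x := lt_of_lt_of_le (by positivity) h1
    rw [abs_of_pos this]; exact h2
  have hB := sum_bd ψ Cb hCb θ
  have humeas : Measurable (fun x => ∑ i, θ i * ψ i x) :=
    Finset.measurable_sum _ fun i _ => (hψmeas i).const_mul _
  have hint_exp : IntegrableOn (fun x => Real.exp (∑ i, θ i * ψ i x)) (Set.Icc (0:ℝ) 1) := by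
    apply ibdd (Real.measurable_exp.comp humeas) (C := Real.exp (‖θ‖ * ∑ i, Cb i))
    intro x _
    simp only [Function.comp]
    rw [Real.abs_exp]
    exact Real.exp_le_exp.2 ((le_abs_self _).trans (hB x))
  have hint_fu : IntegrableOn (fun x => f x * (∑ i, θ i * ψ i x)) (Set.Icc (0:ℝ) 1) := by
    apply ibdd (hf.mul humeas) (C := M₁ * (‖θ‖ * ∑ i, Cb i))
    intro x hx
    rw [Pi.mul_apply, abs_mul]
    exact mul_le_mul (hfabs x hx) (hB x) (abs_nonneg _) hM₁.le
  have hint_absu : IntegrableOn (fun x => |∑ i, θ i * ψ i x|) (Set.Icc (0:ℝ) 1) := by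
    apply ibdd humeas.abs (C := ‖θ‖ * ∑ i, Cb i)
    intro x _; rw [abs_abs]; exact hB x
  have hlin : (∑ i, θ i * (∫ x in Set.Icc (0:ℝ) 1, f x * ψ i x))
      = ∫ x in Set.Icc (0:ℝ) 1, f x * (∑ i, θ i * ψ i x) :=
    (integral_mul_lsum ψ hψmeas Cb hCb hf hfabs θ).symm
  rw [hlin, ← integral_sub hint_exp hint_fu]
  set S := Real.sqrt (∑ i, (θ i)^2) with hS
  have hS0 : 0 ≤ S := Real.sqrt_nonneg _
  have hS2 : S^2 = ∑ i, (θ i)^2 := Real.sq_sqrt (Finset.sum_nonneg fun i _ => sq_nonneg _)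
  have hsupA : ∀ x ∈ Set.Icc (0:ℝ) 1, |∑ i, θ i * ψ i x| ≤ A * S := by
    intro x hx
    refine (le_supIcc hB hx).trans ?_
    have := hA θ
    rwa [integral_sum_sq ψ hψmeas Cb hCb horth θ] at this
  have hu2 : (∑ i, (θ i)^2) ≤ (A * S) * ∫ x in Set.Icc (0:ℝ) 1, |∑ i, θ i * ψ i x| := by
    rw [← integral_sum_sq ψ hψmeas Cb hCb horth θ, ← MeasureTheory.integral_const_mul]
    apply setIntegral_mono_on _ (hint_absu.const_mul _) measurableSet_Icc
    · intro x hx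
      have h1 : (∑ i, θ i * ψ i x)^2 = |∑ i, θ i * ψ i x| * |∑ i, θ i * ψ i x| := by
        rw [← abs_mul, abs_of_nonneg (mul_self_nonneg _)]; ring
      rw [h1]
      exact mul_le_mul_of_nonneg_right (hsupA x hx) (abs_nonneg _)
    · apply ibdd (humeas.pow_const 2) (C := (‖θ‖ * ∑ i, Cb i)^2)
      intro x _
      rw [abs_pow]
      exact pow_le_pow_left₀ (abs_nonneg _) (hB x) 2
  have hIu0 : 0 ≤ ∫ x in Set.Icc (0:ℝ) 1, |∑ i, θ i * ψ i x| :=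
    setIntegral_nonneg measurableSet_Icc fun x _ => abs_nonneg _
  have hθS : ‖θ‖ ≤ S := by
    rw [pi_norm_le_iff_of_nonneg hS0]
    intro i
    rw [Real.norm_eq_abs, ← Real.sqrt_sq_eq_abs]
    exact Real.sqrt_le_sqrt (Finset.single_le_sum (fun j _ => sq_nonneg (θ j)) (Finset.mem_univ i))
  have hL1 : ‖θ‖ / A ≤ ∫ x in Set.Icc (0:ℝ) 1, |∑ i, θ i * ψ i x| := by
    rcases eq_or_lt_of_le hS0 with hS0' | hSpos
    · have h0 : ‖θ‖ = 0 := le_antisymm (hθS.trans hS0'.symm.le) (norm_nonneg _)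
      rw [h0, zero_div]
      exact hIu0
    · have h8 : S * S ≤ ((A * ∫ x in Set.Icc (0:ℝ) 1, |∑ i, θ i * ψ i x|)) * S := by
        have : S * S = S^2 := by ring
        rw [this, hS2]
        calc (∑ i, (θ i)^2) ≤ (A * S) * ∫ x in Set.Icc (0:ℝ) 1, |∑ i, θ i * ψ i x| := hu2
          _ = (A * ∫ x in Set.Icc (0:ℝ) 1, |∑ i, θ i * ψ i x|) * S := by ring
      have h9 : S ≤ A * ∫ x in Set.Icc (0:ℝ) 1, |∑ i, θ i * ψ i x| :=
        le_of_mul_le_mul_right h8 hSpos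
      calc ‖θ‖ / A ≤ S / A := by apply div_le_div_of_nonneg_right hθS hA0.le
        _ ≤ ∫ x in Set.Icc (0:ℝ) 1, |∑ i, θ i * ψ i x| := by
            rw [div_le_iff₀ hA0]; linarith [h9]
  have hKconst : IntegrableOn (fun _ : ℝ => (M₁ + M₁⁻¹) * |1 - Real.log (M₁ + M₁⁻¹)|)
      (Set.Icc (0:ℝ) 1) := integrableOn_const (by rw [Real.volume_Icc]; norm_num)
  have hmono : (∫ x in Set.Icc (0:ℝ) 1,
        (M₁⁻¹ * |∑ i, θ i * ψ i x| - (M₁ + M₁⁻¹) * |1 - Real.log (M₁ + M₁⁻¹)|))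
      ≤ ∫ x in Set.Icc (0:ℝ) 1,
        (Real.exp (∑ i, θ i * ψ i x) - f x * (∑ i, θ i * ψ i x)) := by
    apply setIntegral_mono_on ((hint_absu.const_mul _).sub hKconst)
      (hint_exp.sub hint_fu) measurableSet_Icc
    intro x hx
    exact coercive_pointwise hM₁ (hfbd x hx).1 (hfbd x hx).2
  have hcomp : (∫ x in Set.Icc (0:ℝ) 1,
        (M₁⁻¹ * |∑ i, θ i * ψ i x| - (M₁ + M₁⁻¹) * |1 - Real.log (M₁ + M₁⁻¹)|))
      = M₁⁻¹ * (∫ x in Set.Icc (0:ℝ) 1, |∑ i, θ i * ψ i x|)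
        - (M₁ + M₁⁻¹) * |1 - Real.log (M₁ + M₁⁻¹)| := by
    rw [integral_sub (hint_absu.const_mul _) hKconst, MeasureTheory.integral_const_mul,
      setIntegral_const]
    rw [Real.volume_real_Icc]
    norm_num
  have hfin : M₁⁻¹ * (‖θ‖ / A) ≤ M₁⁻¹ * ∫ x in Set.Icc (0:ℝ) 1, |∑ i, θ i * ψ i x| :=
    mul_le_mul_of_nonneg_left hL1 (by positivity)
  linarith [hmono, hcomp ▸ hmono]

lemma L_continuous {m : ℕ} (ψ : Fin m → ℝ → ℝ) (hψmeas : ∀ i, Measurable (ψ i))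
    (Cb : Fin m → ℝ) (hCb : ∀ i x, |ψ i x| ≤ Cb i) (a : Fin m → ℝ) :
    Continuous (fun θ : Fin m → ℝ =>
      (∫ x in Set.Icc (0:ℝ) 1, Real.exp (∑ i, θ i * ψ i x)) - ∑ i, θ i * a i) := by
  have hCb0 : ∀ i, 0 ≤ Cb i := fun i => (abs_nonneg _).trans (hCb i 0)
  apply Continuous.sub
  · rw [continuous_iff_continuousAt]
    intro θ₀
    apply continuousAt_of_dominated (bound := fun _ => Real.exp ((‖θ₀‖ + 1) * ∑ i, Cb i))
    · apply Filter.Eventually.of_forall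
      intro θ
      exact (Real.measurable_exp.comp
        (Finset.measurable_sum _ fun i _ => (hψmeas i).const_mul _)).aestronglyMeasurable
    · filter_upwards [Metric.ball_mem_nhds θ₀ one_pos] with θ hθ
      apply Filter.Eventually.of_forall
      intro x
      rw [Real.norm_eq_abs, Real.abs_exp]
      apply Real.exp_le_exp.2
      calc (∑ i, θ i * ψ i x) ≤ |∑ i, θ i * ψ i x| := le_abs_self _
        _ ≤ ‖θ‖ * ∑ i, Cb i := sum_bd ψ Cb hCb θ x
        _ ≤ (‖θ₀‖ + 1) * ∑ i, Cb i := by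
            apply mul_le_mul_of_nonneg_right _ (Finset.sum_nonneg fun i _ => hCb0 i)
            have h1 : ‖θ - θ₀‖ < 1 := by rwa [Metric.mem_ball, dist_eq_norm] at hθ
            calc ‖θ‖ = ‖θ₀ + (θ - θ₀)‖ := by ring_nf
              _ ≤ ‖θ₀‖ + ‖θ - θ₀‖ := norm_add_le _ _
              _ ≤ ‖θ₀‖ + 1 := by linarith
    · exact integrable_const _
    · apply Filter.Eventually.of_forall; intro x
      exact (Real.continuous_exp.comp
        (continuous_finset_sum _ fun i _ => (continuous_apply i).mul continuous_const)).continuousAt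
  · exact continuous_finset_sum _ fun i _ => (continuous_apply i).mul continuous_const

lemma moment_match {m : ℕ} (ψ : Fin m → ℝ → ℝ) (hψmeas : ∀ i, Measurable (ψ i))
    (Cb : Fin m → ℝ) (hCb : ∀ i x, |ψ i x| ≤ Cb i)
    (a : Fin m → ℝ) (θs : Fin m → ℝ)
    (hmin : ∀ θ : Fin m → ℝ,
      (∫ x in Set.Icc (0:ℝ) 1, Real.exp (∑ j, θs j * ψ j x)) - ∑ j, θs j * a j ≤
      (∫ x in Set.Icc (0:ℝ) 1, Real.exp (∑ j, θ j * ψ j x)) - ∑ j, θ j * a j)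
    (i : Fin m) :
    (∫ x in Set.Icc (0:ℝ) 1, Real.exp (∑ j, θs j * ψ j x) * ψ i x) = a i := by
  classical
  have hCb0 : ∀ j, 0 ≤ Cb j := fun j => (abs_nonneg _).trans (hCb j 0)
  have hB : ∀ x, |∑ j, θs j * ψ j x| ≤ ‖θs‖ * ∑ j, Cb j := sum_bd ψ Cb hCb θs
  have humeas : Measurable fun x => ∑ j, θs j * ψ j x :=
    Finset.measurable_sum _ fun j _ => (hψmeas j).const_mul _
  set B : ℝ := ‖θs‖ * ∑ j, Cb j with hBdef
  have hexp_arg_bd : ∀ (t : ℝ) x, |t| ≤ 1 →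
      (∑ j, θs j * ψ j x) + t * ψ i x ≤ B + Cb i := by
    intro t x ht
    have h1 : (∑ j, θs j * ψ j x) ≤ B := (le_abs_self _).trans (hB x)
    have h2 : t * ψ i x ≤ Cb i := by
      calc t * ψ i x ≤ |t * ψ i x| := le_abs_self _
        _ = |t| * |ψ i x| := abs_mul _ _
        _ ≤ 1 * Cb i := mul_le_mul ht (hCb i x) (abs_nonneg _) zero_le_one
        _ = Cb i := one_mul _
    linarith
  have key := hasDerivAt_integral_of_dominated_loc_of_deriv_le
    (μ := volume.restrict (Set.Icc (0:ℝ) 1)) (𝕜 := ℝ)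
    (F := fun t x => Real.exp ((∑ j, θs j * ψ j x) + t * ψ i x))
    (F' := fun t x => Real.exp ((∑ j, θs j * ψ j x) + t * ψ i x) * ψ i x)
    (x₀ := 0) (bound := fun _ => Real.exp (B + Cb i) * Cb i)
    (Metric.ball_mem_nhds 0 one_pos)
    (Filter.Eventually.of_forall fun t =>
      (Real.measurable_exp.comp (humeas.add ((hψmeas i).const_mul t))).aestronglyMeasurable)
    (by
      apply ibdd (Real.measurable_exp.comp (humeas.add ((hψmeas i).const_mul 0)))
        (C := Real.exp (B + Cb i))
      intro x _
      simp only [Function.comp]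
      rw [Real.abs_exp]
      exact Real.exp_le_exp.2 (hexp_arg_bd 0 x (by norm_num)))
    ((Real.measurable_exp.comp (humeas.add ((hψmeas i).const_mul 0))).mul
      (hψmeas i)).aestronglyMeasurable
    (Filter.Eventually.of_forall fun x => by
      intro t ht
      rw [Metric.mem_ball, Real.dist_eq, sub_zero] at ht
      rw [Real.norm_eq_abs, abs_mul, Real.abs_exp]
      refine mul_le_mul (Real.exp_le_exp.2 (hexp_arg_bd t x ht.le)) (hCb i x)
        (abs_nonneg _) (Real.exp_pos _).le)
    (integrable_const _)
    (Filter.Eventually.of_forall fun x => by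
      intro t _
      exact ((hasDerivAt_mul_const (ψ i x)).const_add _).exp)
  obtain ⟨-, hder⟩ := key
  set φ : ℝ → ℝ := fun t =>
    (∫ x in Set.Icc (0:ℝ) 1, Real.exp ((∑ j, θs j * ψ j x) + t * ψ i x))
      - ((∑ j, θs j * a j) + t * a i) with hφdef
  have hφder : HasDerivAt φ
      ((∫ x in Set.Icc (0:ℝ) 1, Real.exp ((∑ j, θs j * ψ j x) + 0 * ψ i x) * ψ i x) - a i)
      0 := hder.sub ((hasDerivAt_mul_const (a i)).const_add _)
  have hloc : IsLocalMin φ 0 := by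
    apply Filter.Eventually.of_forall
    intro t
    have hsum1 : ∀ x, (∑ j, (θs j + t * (if j = i then 1 else 0)) * ψ j x)
        = (∑ j, θs j * ψ j x) + t * ψ i x := by
      intro x
      have h1 : ∀ j, (θs j + t * (if j = i then 1 else 0)) * ψ j x
          = θs j * ψ j x + (if j = i then t * ψ j x else 0) := by
        intro j; by_cases h : j = i <;> simp [h] <;> ring
      rw [Finset.sum_congr rfl fun j _ => h1 j, Finset.sum_add_distrib,
        Finset.sum_ite_eq' Finset.univ i (fun j => t * ψ j x)]
      simp
    have hsum2 : (∑ j, (θs j + t * (if j = i then 1 else 0)) * a j)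
        = (∑ j, θs j * a j) + t * a i := by
      have h1 : ∀ j, (θs j + t * (if j = i then 1 else 0)) * a j
          = θs j * a j + (if j = i then t * a j else 0) := by
        intro j; by_cases h : j = i <;> simp [h] <;> ring
      rw [Finset.sum_congr rfl fun j _ => h1 j, Finset.sum_add_distrib,
        Finset.sum_ite_eq' Finset.univ i (fun j => t * a j)]
      simp
    have h2 := hmin (fun j => θs j + t * (if j = i then 1 else 0))
    simp only [hsum1, hsum2] at h2
    have h3 : φ 0 ≤ (∫ x in Set.Icc (0:ℝ) 1, Real.exp ((∑ j, θs j * ψ j x) + t * ψ i x))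
        - ((∑ j, θs j * a j) + t * a i) := by
      rw [hφdef]
      simp only [zero_mul, add_zero]
      exact h2
    exact h3
  have hzero := hloc.hasDerivAt_eq_zero hφder
  have h4 : (∫ x in Set.Icc (0:ℝ) 1, Real.exp ((∑ j, θs j * ψ j x) + 0 * ψ i x) * ψ i x)
      = a i := by linarith [hzero]
  rw [← h4]
  congr 1
  funext x
  simp

lemma ae_bound_of_top {r : ℝ → ℝ} (hfin : MemLp r ⊤ (volume.restrict (Set.Icc (0:ℝ) 1))) :
    ∀ᵐ x ∂(volume.restrict (Set.Icc (0:ℝ) 1)),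
      |r x| ≤ (eLpNorm r ⊤ (volume.restrict (Set.Icc (0:ℝ) 1))).toReal := by
  have h1 := ae_le_eLpNormEssSup (f := r) (μ := volume.restrict (Set.Icc (0:ℝ) 1))
  have hfin2 : eLpNormEssSup r (volume.restrict (Set.Icc (0:ℝ) 1)) ≠ ⊤ := by
    rw [← eLpNorm_exponent_top]; exact hfin.2.ne
  filter_upwards [h1] with x hx
  have h2 := ENNReal.toReal_mono hfin2 hx
  rw [eLpNorm_exponent_top]
  simpa [Real.norm_eq_abs] using h2

lemma KL_bound {m : ℕ} (ψ : Fin m → ℝ → ℝ) (hψmeas : ∀ i, Measurable (ψ i))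
    (Cb : Fin m → ℝ) (hCb : ∀ i x, |ψ i x| ≤ Cb i)
    (f : ℝ → ℝ) (hf : Measurable f) (M₁ : ℝ) (hM₁ : 0 < M₁)
    (hfbd : ∀ x ∈ Set.Icc (0:ℝ) 1, M₁⁻¹ ≤ f x ∧ f x ≤ M₁)
    (γ : ℝ) (θs : Fin m → ℝ)
    (hae : ∀ᵐ x ∂(volume.restrict (Set.Icc (0:ℝ) 1)), |projResidual ψ f x| ≤ γ)
    (hmom : ∀ i, (∫ x in Set.Icc (0:ℝ) 1, expFam ψ θs x * ψ i x)
      = ∫ x in Set.Icc (0:ℝ) 1, f x * ψ i x) :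
    KLdiv f (expFam ψ θs)
      ≤ (M₁ / 2) * Real.exp γ * (∫ x in Set.Icc (0:ℝ) 1, (projResidual ψ f x)^2) := by
  classical
  have hCb0 : ∀ j, 0 ≤ Cb j := fun j => (abs_nonneg _).trans (hCb j 0)
  have hM1' : 1 ≤ M₁ := by
    have h0 : (0:ℝ) ∈ Set.Icc (0:ℝ) 1 := Set.mem_Icc.2 ⟨le_refl 0, zero_le_one⟩
    have h1 := (hfbd 0 h0).1.trans (hfbd 0 h0).2
    nlinarith [inv_mul_cancel₀ hM₁.ne']
  have hfpos : ∀ x ∈ Set.Icc (0:ℝ) 1, 0 < f x := fun x hx =>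
    lt_of_lt_of_le (by positivity) (hfbd x hx).1
  have hfabs : ∀ x ∈ Set.Icc (0:ℝ) 1, |f x| ≤ M₁ := fun x hx => by
    rw [abs_of_pos (hfpos x hx)]; exact (hfbd x hx).2
  set gv : Fin m → ℝ := fun i => ∫ t in Set.Icc (0:ℝ) 1, Real.log (f t) * ψ i t with hgv
  set w : ℝ → ℝ := fun x => ∑ i, gv i * ψ i x with hw
  set v : ℝ → ℝ := fun x => ∑ j, θs j * ψ j x with hv
  have hr : ∀ x, projResidual ψ f x = Real.log (f x) - w x := fun x => rfl
  have hp : ∀ x, expFam ψ θs x = Real.exp (v x) := fun x => rfl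
  have hwmeas : Measurable w := Finset.measurable_sum _ fun j _ => (hψmeas j).const_mul _
  have hvmeas : Measurable v := Finset.measurable_sum _ fun j _ => (hψmeas j).const_mul _
  have hgmeas : Measurable fun x => Real.log (f x) := hf.log
  have hrmeas : Measurable (projResidual ψ f) := by
    have he : projResidual ψ f = fun x => Real.log (f x) - w x := funext hr
    rw [he]; exact hgmeas.sub hwmeas
  have hpmeas : Measurable (expFam ψ θs) := Real.measurable_exp.comp hvmeas
  have hwbd : ∀ x, |w x| ≤ ‖gv‖ * ∑ j, Cb j := sum_bd ψ Cb hCb gv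
  have hvbd : ∀ x, |v x| ≤ ‖θs‖ * ∑ j, Cb j := sum_bd ψ Cb hCb θs
  have hgbd : ∀ x ∈ Set.Icc (0:ℝ) 1, |Real.log (f x)| ≤ Real.log M₁ := by
    intro x hx
    rw [abs_le]
    constructor
    · rw [← Real.log_inv]
      exact Real.log_le_log (by positivity) (hfbd x hx).1
    · exact Real.log_le_log (hfpos x hx) (hfbd x hx).2
  have hrbd : ∀ x ∈ Set.Icc (0:ℝ) 1,
      |projResidual ψ f x| ≤ Real.log M₁ + ‖gv‖ * ∑ j, Cb j := by
    intro x hx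
    rw [hr]
    calc |Real.log (f x) - w x| ≤ |Real.log (f x)| + |w x| := abs_sub _ _
      _ ≤ Real.log M₁ + ‖gv‖ * ∑ j, Cb j := add_le_add (hgbd x hx) (hwbd x)
  have hpbd : ∀ x, |expFam ψ θs x| ≤ Real.exp (‖θs‖ * ∑ j, Cb j) := by
    intro x
    rw [hp, Real.abs_exp]
    exact Real.exp_le_exp.2 ((le_abs_self _).trans (hvbd x))
  have hqbd : ∀ x, |Real.exp (w x)| ≤ Real.exp (‖gv‖ * ∑ j, Cb j) := by
    intro x
    rw [Real.abs_exp]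
    exact Real.exp_le_exp.2 ((le_abs_self _).trans (hwbd x))
  set Φa : ℝ → ℝ := fun x => f x * projResidual ψ f x - f x + Real.exp (w x) with hΦa
  set Φb : ℝ → ℝ := fun x => expFam ψ θs x * (v x - w x) - expFam ψ θs x + Real.exp (w x)
    with hΦb
  set Φc : ℝ → ℝ := fun x => (expFam ψ θs x - f x) * (v x - w x) with hΦc
  have hia : IntegrableOn Φa (Set.Icc (0:ℝ) 1) := by
    apply ibdd ((hf.mul hrmeas).sub hf |>.add (Real.measurable_exp.comp hwmeas))
      (C := M₁ * (Real.log M₁ + ‖gv‖ * ∑ j, Cb j) + M₁ + Real.exp (‖gv‖ * ∑ j, Cb j))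
    intro x hx
    refine abs3.trans ?_
    gcongr
    · rw [Pi.mul_apply, abs_mul]
      exact mul_le_mul (hfabs x hx) (hrbd x hx) (abs_nonneg _) hM₁.le
    · exact hfabs x hx
    · exact hqbd x
  have hib : IntegrableOn Φb (Set.Icc (0:ℝ) 1) := by
    apply ibdd ((hpmeas.mul (hvmeas.sub hwmeas)).sub hpmeas
      |>.add (Real.measurable_exp.comp hwmeas))
      (C := Real.exp (‖θs‖ * ∑ j, Cb j) * (‖θs‖ * ∑ j, Cb j + ‖gv‖ * ∑ j, Cb j)
        + Real.exp (‖θs‖ * ∑ j, Cb j) + Real.exp (‖gv‖ * ∑ j, Cb j))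
    intro x _
    refine abs3.trans ?_
    gcongr
    · rw [Pi.mul_apply, abs_mul]
      refine mul_le_mul (hpbd x) ?_ (abs_nonneg _) (Real.exp_pos _).le
      calc |v x - w x| ≤ |v x| + |w x| := abs_sub _ _
        _ ≤ _ := add_le_add (hvbd x) (hwbd x)
    · exact hpbd x
    · exact hqbd x
  have hic : IntegrableOn Φc (Set.Icc (0:ℝ) 1) := by
    apply ibdd ((hpmeas.sub hf).mul (hvmeas.sub hwmeas))
      (C := (Real.exp (‖θs‖ * ∑ j, Cb j) + M₁)
        * (‖θs‖ * ∑ j, Cb j + ‖gv‖ * ∑ j, Cb j))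
    intro x hx
    rw [Pi.mul_apply, abs_mul]
    refine mul_le_mul ?_ ?_ (abs_nonneg _) (by positivity)
    · calc |expFam ψ θs x - f x| ≤ |expFam ψ θs x| + |f x| := abs_sub _ _
        _ ≤ _ := add_le_add (hpbd x) (hfabs x hx)
    · calc |v x - w x| ≤ |v x| + |w x| := abs_sub _ _
        _ ≤ _ := add_le_add (hvbd x) (hwbd x)
  have hKL : KLdiv f (expFam ψ θs)
      = (∫ x in Set.Icc (0:ℝ) 1, Φa x) - (∫ x in Set.Icc (0:ℝ) 1, Φb x)
        + ∫ x in Set.Icc (0:ℝ) 1, Φc x := by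
    have e1 : (∫ x in Set.Icc (0:ℝ) 1, (Φa x - Φb x + Φc x))
        = (∫ x in Set.Icc (0:ℝ) 1, (Φa x - Φb x)) + ∫ x in Set.Icc (0:ℝ) 1, Φc x :=
      integral_add (hia.sub hib) hic
    have e2 : (∫ x in Set.Icc (0:ℝ) 1, (Φa x - Φb x))
        = (∫ x in Set.Icc (0:ℝ) 1, Φa x) - ∫ x in Set.Icc (0:ℝ) 1, Φb x :=
      integral_sub hia hib
    rw [KLdiv, setIntegral_congr_fun measurableSet_Icc
      (g := fun x => Φa x - Φb x + Φc x) ?_]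
    · rw [e1, e2]
    · intro x hx
      have h1 : Real.log (f x / expFam ψ θs x) = Real.log (f x) - v x := by
        rw [Real.log_div (hfpos x hx).ne' (by rw [hp]; exact (Real.exp_pos _).ne'), hp,
          Real.log_exp]
      simp only [hΦa, hΦb, hΦc, h1, hr]
      ring
  have hc0 : (∫ x in Set.Icc (0:ℝ) 1, Φc x) = 0 := by
    have h1 : ∀ x, Φc x = (expFam ψ θs x - f x) * (∑ i, (θs i - gv i) * ψ i x) := by
      intro x
      simp only [hΦc, hv, hw, sub_mul, Finset.sum_sub_distrib]
    simp only [h1]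
    rw [integral_mul_lsum ψ hψmeas Cb hCb (h := fun x => expFam ψ θs x - f x) (hpmeas.sub hf)
      (Ch := Real.exp (‖θs‖ * ∑ j, Cb j) + M₁) ?_ _]
    · apply Finset.sum_eq_zero
      intro i _
      have h2 : ∀ x, (expFam ψ θs x - f x) * ψ i x
          = expFam ψ θs x * ψ i x - f x * ψ i x := fun x => by ring
      simp only [h2]
      rw [integral_sub ?_ ?_]
      · rw [hmom i, sub_self, mul_zero]
      · apply ibdd (hpmeas.mul (hψmeas i))
          (C := Real.exp (‖θs‖ * ∑ j, Cb j) * Cb i)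
        intro x _
        rw [Pi.mul_apply, abs_mul]
        exact mul_le_mul (hpbd x) (hCb i x) (abs_nonneg _) (Real.exp_pos _).le
      · apply ibdd (hf.mul (hψmeas i)) (C := M₁ * Cb i)
        intro x hx
        rw [Pi.mul_apply, abs_mul]
        exact mul_le_mul (hfabs x hx) (hCb i x) (abs_nonneg _) hM₁.le
    · intro x hx
      calc |expFam ψ θs x - f x| ≤ |expFam ψ θs x| + |f x| := abs_sub _ _
        _ ≤ _ := add_le_add (hpbd x) (hfabs x hx)
  have hb0 : 0 ≤ ∫ x in Set.Icc (0:ℝ) 1, Φb x := by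
    apply setIntegral_nonneg measurableSet_Icc
    intro x _
    have h3 := Real.add_one_le_exp (w x - v x)
    have h4 : (w x - v x + 1) * Real.exp (v x) ≤ Real.exp (w x) := by
      calc (w x - v x + 1) * Real.exp (v x)
          ≤ Real.exp (w x - v x) * Real.exp (v x) :=
            mul_le_mul_of_nonneg_right h3 (Real.exp_pos _).le
        _ = Real.exp (w x) := by rw [← Real.exp_add]; ring_nf
    simp only [hΦb, hp]
    nlinarith [Real.exp_pos (v x)]
  have ha_le : (∫ x in Set.Icc (0:ℝ) 1, Φa x)
      ≤ (M₁ / 2) * Real.exp γ * ∫ x in Set.Icc (0:ℝ) 1, (projResidual ψ f x)^2 := by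
    rw [← MeasureTheory.integral_const_mul]
    apply integral_mono_ae hia ?_ ?_
    · apply (ibdd (hrmeas.pow_const 2)
        (C := (Real.log M₁ + ‖gv‖ * ∑ j, Cb j)^2)  ?_ ).const_mul _
      intro x hx
      rw [abs_pow]
      exact pow_le_pow_left₀ (abs_nonneg _) (hrbd x hx) 2
    · filter_upwards [hae, ae_restrict_mem measurableSet_Icc] with x h1 h2
      have hfx := hfpos x h2
      have hqe : Real.exp (w x) = f x * Real.exp (-(projResidual ψ f x)) := by
        rw [hr]
        have : -(Real.log (f x) - w x) = w x - Real.log (f x) := by ring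
        rw [this, Real.exp_sub, Real.exp_log hfx]
        field_simp
      have h5 : Real.exp (-(projResidual ψ f x)) - 1 - (-(projResidual ψ f x))
          ≤ (-(projResidual ψ f x))^2/2 * Real.exp γ :=
        exp_taylor_two (by rwa [abs_neg])
      have h6 : 0 ≤ projResidual ψ f x - 1 + Real.exp (-(projResidual ψ f x)) := by
        linarith [Real.add_one_le_exp (-(projResidual ψ f x))]
      have h7 : Φa x = f x * (projResidual ψ f x - 1 + Real.exp (-(projResidual ψ f x))) := by
        simp only [hΦa, hqe]; ring
      rw [h7]
      calc f x * (projResidual ψ f x - 1 + Real.exp (-(projResidual ψ f x)))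
          ≤ M₁ * ((projResidual ψ f x)^2/2 * Real.exp γ) := by
            refine mul_le_mul (hfbd x h2).2 ?_ h6 hM₁.le
            have : (-(projResidual ψ f x))^2 = (projResidual ψ f x)^2 := by ring
            rw [this] at h5
            linarith
        _ = M₁ / 2 * Real.exp γ * (projResidual ψ f x)^2 := by ring
  linarith [hKL, hc0, hb0, ha_le]

/-- existence of the information projection and bound on the
approximation error. -/
theorem stmt_14 {m : ℕ} (ψ : Fin m → ℝ → ℝ)
    (hψmeas : ∀ i, Measurable (ψ i)) (hψbdd : ∀ i, ∃ C, ∀ x, |ψ i x| ≤ C)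
    (horth : ∀ i j, (∫ x in Set.Icc (0:ℝ) 1, ψ i x * ψ j x) = if i = j then 1 else 0)
    (A : ℝ)
    (hA : ∀ c : Fin m → ℝ, supIcc (fun x => ∑ i, c i * ψ i x)
      ≤ A * Real.sqrt (∫ x in Set.Icc (0:ℝ) 1, (∑ i, c i * ψ i x)^2))
    (f : ℝ → ℝ) (hf : Measurable f) (M₁ : ℝ) (hM₁ : 0 < M₁)
    (hfbd : ∀ x ∈ Set.Icc (0:ℝ) 1, M₁⁻¹ ≤ f x ∧ f x ≤ M₁)
    (γ D : ℝ)
    (hγ : γ = (eLpNorm (projResidual ψ f) ⊤ (volume.restrict (Set.Icc (0:ℝ) 1))).toReal)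
    (hγfin : MemLp (projResidual ψ f) ⊤ (volume.restrict (Set.Icc (0:ℝ) 1)))
    (hD : D = Real.sqrt (∫ x in Set.Icc (0:ℝ) 1, (projResidual ψ f x)^2))
    (hε : 2 * M₁^2 * Real.exp (2 * γ + 1) * D * A ≤ 1) :
    ∃ θs : Fin m → ℝ,
      (∀ i, (∫ x in Set.Icc (0:ℝ) 1, expFam ψ θs x * ψ i x)
          = ∫ x in Set.Icc (0:ℝ) 1, f x * ψ i x) ∧
      KLdiv f (expFam ψ θs) ≤ (M₁ / 2) * Real.exp γ * D^2 := by
  classical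
  choose Cb hCb using hψbdd
  set a : Fin m → ℝ := fun i => ∫ x in Set.Icc (0:ℝ) 1, f x * ψ i x with ha
  have hcont := L_continuous ψ hψmeas Cb hCb a
  have hcoer : Filter.Tendsto (fun θ : Fin m → ℝ =>
      (∫ x in Set.Icc (0:ℝ) 1, Real.exp (∑ i, θ i * ψ i x)) - ∑ i, θ i * a i)
      (Filter.cocompact _) Filter.atTop := by
    rcases Nat.eq_zero_or_pos m with hm | hm
    · subst hm
      rw [Filter.cocompact_eq_bot]
      exact Filter.tendsto_bot
    · have hA0 := A_pos hm ψ Cb hCb horth A hA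
      apply Filter.tendsto_atTop_mono
        (fun θ => L_lower_bound ψ hψmeas Cb hCb horth A hA0 hA f hf M₁ hM₁ hfbd θ)
      have h1 : Filter.Tendsto (fun θ : Fin m → ℝ => M₁⁻¹ * (‖θ‖ / A))
          (Filter.cocompact _) Filter.atTop :=
        (tendsto_norm_cocompact_atTop.atTop_div_const hA0).const_mul_atTop (by positivity)
      have h2 := Filter.tendsto_atTop_add_const_right (Filter.cocompact (Fin m → ℝ))
        (-((M₁ + M₁⁻¹) * |1 - Real.log (M₁ + M₁⁻¹)|)) h1
      simpa [sub_eq_add_neg] using h2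
  obtain ⟨θs, hmin⟩ := hcont.exists_forall_le hcoer
  have hmom : ∀ i, (∫ x in Set.Icc (0:ℝ) 1, expFam ψ θs x * ψ i x)
      = ∫ x in Set.Icc (0:ℝ) 1, f x * ψ i x := by
    intro i
    have h1 := moment_match ψ hψmeas Cb hCb a θs (fun θ => hmin θ) i
    show (∫ x in Set.Icc (0:ℝ) 1, expFam ψ θs x * ψ i x) = a i
    simpa [expFam] using h1
  refine ⟨θs, hmom, ?_⟩
  have hae := ae_bound_of_top hγfin
  rw [← hγ] at hae
  have hKL := KL_bound ψ hψmeas Cb hCb f hf M₁ hM₁ hfbd γ θs hae hmom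
  have hD2 : D^2 = ∫ x in Set.Icc (0:ℝ) 1, (projResidual ψ f x)^2 := by
    rw [hD, Real.sq_sqrt (setIntegral_nonneg measurableSet_Icc fun x _ => sq_nonneg _)]
  rw [hD2]
  exact hKL
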